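/- Let Γ be a finite connected loopless graph with genus weights p : V → ℕ, and suppose (Γ, p) is not a cusp graph (i.e. not all vertices have valency 2 with p ≡ 0). Fix a vertex i with valency v_i ≥ 2. Then as (n, e) ranges over all solutions of the adjunction system e_j n_j = v_j + 2p_j − 2 + Σ_{k≠j} e_{jk} n_k (for all j) with Q_{(Γ,e)} negative definite, the value e_i takes only finitely many values. -/

import Mathlib

open Finset

/-- M-matrix positivity: if the form is negative definite and `A x ≥ 0` coordinatewise
(where `A = diag e - W`), then `x ≥ 0`. -/
lemma adj_keyA {V : Type*} [Fintype V] [DecidableEq V]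
    (w : V → V → ℕ) (e : V → ℕ)
    (hQ : ∀ x : V → ℝ, x ≠ 0 →
      ∑ j, x j * (-(e j : ℝ) * x j + ∑ k ∈ univ.erase j, (w j k : ℝ) * x k) < 0)
    (x : V → ℝ)
    (hx : ∀ j, (∑ k ∈ univ.erase j, (w j k : ℝ) * x k) ≤ (e j : ℝ) * x j) :
    ∀ j, 0 ≤ x j := by
  by_contra hcon
  push_neg at hcon
  obtain ⟨j0, hj0⟩ := hcon
  set y : V → ℝ := fun j => max (-x j) 0 with hy
  have hy0 : ∀ j, 0 ≤ y j := fun j => le_max_right _ _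
  have hyx : ∀ j, -x j ≤ y j := fun j => le_max_left _ _
  have hyne : y ≠ 0 := by
    intro h
    have h0 : y j0 = 0 := congrFun h j0
    have h1 : -x j0 ≤ 0 := h0 ▸ hyx j0
    linarith
  have hneg := hQ y hyne
  have hnn : 0 ≤ ∑ j, y j * (-(e j : ℝ) * y j + ∑ k ∈ univ.erase j, (w j k : ℝ) * y k) := by
    apply Finset.sum_nonneg
    intro j _
    rcases le_or_gt (y j) 0 with h | h
    · have hz : y j = 0 := le_antisymm h (hy0 j)
      rw [hz]; simp
    · apply mul_nonneg h.le
      have hxj : -x j > 0 := by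
        by_contra hc
        push_neg at hc
        have : y j = 0 := max_eq_right hc
        linarith
      have hyj : y j = -x j := max_eq_left hxj.le
      have h2 : 0 ≤ ∑ k ∈ univ.erase j, (w j k : ℝ) * (x k + y k) := by
        apply Finset.sum_nonneg
        intro k _
        apply mul_nonneg (Nat.cast_nonneg _)
        have := hyx k
        linarith
      have e1 : -(e j : ℝ) * y j + ∑ k ∈ univ.erase j, (w j k : ℝ) * y k
          = ((e j : ℝ) * x j - ∑ k ∈ univ.erase j, (w j k : ℝ) * x k)
            + ∑ k ∈ univ.erase j, (w j k : ℝ) * (x k + y k) := by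
        rw [hyj]
        simp only [mul_add]
        rw [Finset.sum_add_distrib]
        ring
      rw [e1]
      have := hx j
      linarith
  linarith

/-- Comparison: among two solutions of the adjunction system, larger `e` yields smaller `n`. -/
lemma adj_keyB {V : Type*} [Fintype V] [DecidableEq V]
    (w : V → V → ℕ) (p : V → ℕ) (n e n' e' : V → ℕ)
    (he : ∀ j, (e j : ℤ) * n j = (∑ k ∈ univ.erase j, (w j k : ℤ)) + 2 * p j - 2
        + ∑ k ∈ univ.erase j, (w j k : ℤ) * n k)
    (he' : ∀ j, (e' j : ℤ) * n' j = (∑ k ∈ univ.erase j, (w j k : ℤ)) + 2 * p j - 2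
        + ∑ k ∈ univ.erase j, (w j k : ℤ) * n' k)
    (hQ : ∀ x : V → ℝ, x ≠ 0 →
      ∑ j, x j * (-(e j : ℝ) * x j + ∑ k ∈ univ.erase j, (w j k : ℝ) * x k) < 0)
    (hle : ∀ j, e j ≤ e' j) :
    ∀ j, n' j ≤ n j := by
  have key : ∀ j, (0:ℝ) ≤ ((fun j => (n j : ℝ) - (n' j : ℝ)) j) := by
    apply adj_keyA w e hQ
    intro j
    show (∑ k ∈ univ.erase j, (w j k : ℝ) * ((n k : ℝ) - (n' k : ℝ)))
        ≤ (e j : ℝ) * ((n j : ℝ) - (n' j : ℝ))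
    have h1 : (e j : ℝ) * n j = (∑ k ∈ univ.erase j, (w j k : ℝ)) + 2 * p j - 2
        + ∑ k ∈ univ.erase j, (w j k : ℝ) * n k := by exact_mod_cast he j
    have h2 : (e' j : ℝ) * n' j = (∑ k ∈ univ.erase j, (w j k : ℝ)) + 2 * p j - 2
        + ∑ k ∈ univ.erase j, (w j k : ℝ) * n' k := by exact_mod_cast he' j
    have h3 : ((e j : ℝ)) ≤ (e' j : ℝ) := by exact_mod_cast hle j
    have h4 : (0:ℝ) ≤ ((e' j : ℝ) - e j) * n' j :=
      mul_nonneg (by linarith) (Nat.cast_nonneg _)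
    have h5 : ∑ k ∈ univ.erase j, (w j k : ℝ) * ((n k : ℝ) - (n' k : ℝ))
        = (∑ k ∈ univ.erase j, (w j k : ℝ) * n k)
          - ∑ k ∈ univ.erase j, (w j k : ℝ) * n' k := by
      rw [← Finset.sum_sub_distrib]
      exact Finset.sum_congr rfl fun k _ => by ring
    rw [h5]
    nlinarith [h1, h2, h4]
  intro j
  have hj := key j
  simp only [sub_nonneg] at hj
  exact_mod_cast hj

/-- If the graph is not a cusp graph and vertex `i` has valency `≥ 2`, then in any solution
of the adjunction system, `n i ≥ 1`. -/
lemma adj_keyC {V : Type*} [Fintype V] [DecidableEq V]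
    (w : V → V → ℕ) (hsymm : ∀ i j, w i j = w j i) (hdiag : ∀ i, w i i = 0)
    (hconn : (SimpleGraph.fromRel (fun i j => 0 < w i j)).Connected)
    (p : V → ℕ)
    (hnotcusp : ¬ (∀ j, (∑ k ∈ univ.erase j, w j k) = 2 ∧ p j = 0))
    (i : V) (hvi : 2 ≤ ∑ k ∈ univ.erase i, w i k)
    (n e : V → ℕ)
    (he : ∀ j, (e j : ℤ) * n j = (∑ k ∈ univ.erase j, (w j k : ℤ)) + 2 * p j - 2
        + ∑ k ∈ univ.erase j, (w j k : ℤ) * n k) :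
    1 ≤ n i := by
  by_contra hni
  have hni0 : n i = 0 := by omega
  -- helper: the balance equation at a vertex with n = 0
  have helper : ∀ j, n j = 0 →
      (∑ k ∈ univ.erase j, w j k) + 2 * p j + (∑ k ∈ univ.erase j, w j k * n k) = 2 := by
    intro j hj
    have h0 := he j
    rw [hj] at h0
    have h1 : ((∑ k ∈ univ.erase j, w j k : ℕ) : ℤ) + 2 * (p j : ℤ) - 2
        + ((∑ k ∈ univ.erase j, w j k * n k : ℕ) : ℤ) = 0 := by
      push_cast
      push_cast at h0
      linarith
    omega
  -- the propagated property
  set P : V → Prop := fun u => n u = 0 ∧ (∑ k ∈ univ.erase u, w u k) = 2 ∧ p u = 0 ∧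
      (∀ m, 0 < w u m → n m = 0) with hP
  -- from "n u = 0 and valency 2 balance", extract the rest
  have mk : ∀ u, n u = 0 → (∑ k ∈ univ.erase u, w u k) = 2 → p u = 0 →
      (∑ k ∈ univ.erase u, w u k * n k) = 0 → P u := by
    intro u h1 h2 h3 h4
    refine ⟨h1, h2, h3, ?_⟩
    intro m hm
    by_cases hmu : m = u
    · rw [hmu, hdiag] at hm; omega
    · have hmem : m ∈ univ.erase u := Finset.mem_erase.2 ⟨hmu, Finset.mem_univ m⟩
      have := (Finset.sum_eq_zero_iff.1 h4) m hmem
      have hw : 0 < w u m := hm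
      exact (Nat.mul_eq_zero.1 this).resolve_left (by omega)
  have base : P i := by
    have hb := helper i hni0
    have hv2 : (∑ k ∈ univ.erase i, w i k) = 2 ∧ p i = 0 ∧
        (∑ k ∈ univ.erase i, w i k * n k) = 0 := by omega
    exact mk i hni0 hv2.1 hv2.2.1 hv2.2.2
  -- the propagation step
  have core : ∀ u m, m ≠ u → 0 < w u m → n u = 0 → n m = 0 → P u := by
    intro u m hmu hw hu hm
    have hb := helper u hu
    have hmem : m ∈ univ.erase u := Finset.mem_erase.2 ⟨hmu, Finset.mem_univ m⟩
    have hle : w u m ≤ ∑ k ∈ univ.erase u, w u k :=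
      Finset.single_le_sum (fun k _ => Nat.zero_le _) hmem
    -- valency is 1 or 2
    rcases (by omega : (∑ k ∈ univ.erase u, w u k) = 1 ∨ (∑ k ∈ univ.erase u, w u k) = 2)
      with hv | hv
    · -- valency 1: only edge is to m, contradiction
      exfalso
      have hsplit : w u m + ∑ k ∈ (univ.erase u).erase m, w u k
          = ∑ k ∈ univ.erase u, w u k := Finset.add_sum_erase _ _ hmem
      have hw1 : w u m = 1 ∧ ∑ k ∈ (univ.erase u).erase m, w u k = 0 := by omega
      have hz : (∑ k ∈ univ.erase u, w u k * n k) = 0 := by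
        rw [← Finset.add_sum_erase _ _ hmem, hm]
        have : ∑ k ∈ (univ.erase u).erase m, w u k * n k = 0 := by
          apply Finset.sum_eq_zero
          intro k hk
          have := (Finset.sum_eq_zero_iff.1 hw1.2) k hk
          rw [this, Nat.zero_mul]
        omega
      omega
    · -- valency 2: standard case
      have hz : p u = 0 ∧ (∑ k ∈ univ.erase u, w u k * n k) = 0 := by omega
      exact mk u hu hv hz.1 hz.2
  -- adjacency step
  have step : ∀ u v, (SimpleGraph.fromRel (fun a b => 0 < w a b)).Adj u v → P u → P v := by
    intro u v huv hPu
    rw [SimpleGraph.fromRel_adj] at huv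
    obtain ⟨hne, hor⟩ := huv
    have hwuv : 0 < w u v := by
      rcases hor with h | h
      · exact h
      · rw [hsymm]; exact h
    have hnv : n v = 0 := hPu.2.2.2 v hwuv
    have hwvu : 0 < w v u := by rw [hsymm]; exact hwuv
    exact core v u hne hwvu hnv hPu.1
  -- walk induction
  have all' : ∀ (u v : V), (SimpleGraph.fromRel (fun a b => 0 < w a b)).Walk u v → P u → P v := by
    intro u v wk
    induction wk with
    | nil => exact fun h => h
    | cons h q ih => exact fun hPa => ih (step _ _ h hPa)
  have all : ∀ j, P j := fun j => (hconn.preconnected i j).elim fun wk => all' i j wk base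
  exact hnotcusp fun j => ⟨(all j).2.1, (all j).2.2.1⟩

/-- If `(Γ, p)` is not a cusp graph and the vertex `i` has valency at least 2, then
`e i` takes only finitely many values among solutions `(n, e)` of the adjunction system
with negative definite intersection form. -/
theorem stmt_13 {V : Type*} [Fintype V] [DecidableEq V]
    (w : V → V → ℕ) (hsymm : ∀ i j, w i j = w j i) (hdiag : ∀ i, w i i = 0)
    (hconn : (SimpleGraph.fromRel (fun i j => 0 < w i j)).Connected)
    (p : V → ℕ)
    (hnotcusp : ¬ (∀ j, (∑ k ∈ univ.erase j, w j k) = 2 ∧ p j = 0))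
    (i : V) (hvi : 2 ≤ ∑ k ∈ univ.erase i, w i k) :
    {m : ℕ | ∃ n e : V → ℕ, (∀ j, 1 ≤ e j) ∧
      (∀ j, (e j : ℤ) * n j = (∑ k ∈ univ.erase j, (w j k : ℤ)) + 2 * p j - 2
        + ∑ k ∈ univ.erase j, (w j k : ℤ) * n k) ∧
      (∀ x : V → ℝ, x ≠ 0 →
        ∑ j, x j * (-(e j : ℝ) * x j + ∑ k ∈ univ.erase j, (w j k : ℝ) * x k) < 0) ∧
      e i = m}.Finite := by
  by_contra hfin
  have hnb : ¬ BddAbove {m : ℕ | ∃ n e : V → ℕ, (∀ j, 1 ≤ e j) ∧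
      (∀ j, (e j : ℤ) * n j = (∑ k ∈ univ.erase j, (w j k : ℤ)) + 2 * p j - 2
        + ∑ k ∈ univ.erase j, (w j k : ℤ) * n k) ∧
      (∀ x : V → ℝ, x ≠ 0 →
        ∑ j, x j * (-(e j : ℝ) * x j + ∑ k ∈ univ.erase j, (w j k : ℝ) * x k) < 0) ∧
      e i = m} := by
    rintro ⟨B, hB⟩
    exact hfin (Set.Finite.subset (Set.finite_Iic B) fun m hm => hB hm)
  rw [not_bddAbove_iff] at hnb
  have hex : ∀ t : ℕ, ∃ ne : (V → ℕ) × (V → ℕ),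
      (∀ j, (ne.2 j : ℤ) * ne.1 j = (∑ k ∈ univ.erase j, (w j k : ℤ)) + 2 * p j - 2
        + ∑ k ∈ univ.erase j, (w j k : ℤ) * ne.1 k) ∧
      (∀ x : V → ℝ, x ≠ 0 →
        ∑ j, x j * (-(ne.2 j : ℝ) * x j + ∑ k ∈ univ.erase j, (w j k : ℝ) * x k) < 0) ∧
      t < ne.2 i := by
    intro t
    obtain ⟨m, hm, hlt⟩ := hnb t
    obtain ⟨n, e, _, h2, h3, h4⟩ := hm
    exact ⟨(n, e), h2, h3, by simpa [h4] using hlt⟩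
  choose F h2 h3 h4 using hex
  have hPWO : (Set.univ : Set (V → ℕ)).IsPWO :=
    Set.isPWO_of_wellQuasiOrderedLE Set.univ
  obtain ⟨g, hg⟩ := hPWO.exists_monotone_subseq
    (f := fun t => (F t).2) (fun _ => Set.mem_univ _)
  -- base solution at index g 0
  set n0 : V → ℕ := (F (g 0)).1 with hn0
  -- bound
  set B : ℕ := (∑ k ∈ univ.erase i, w i k) + 2 * p i
      + (∑ k ∈ univ.erase i, w i k * n0 k) with hBdef
  set t : ℕ := g (B + 1) with ht
  have hK : B + 1 ≤ t := g.strictMono.le_apply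
  have hle : ∀ j, (F (g 0)).2 j ≤ (F t).2 j := by
    have := hg (Nat.zero_le (B + 1))
    exact fun j => this j
  have hcomp : ∀ j, (F t).1 j ≤ n0 j :=
    adj_keyB w p n0 (F (g 0)).2 (F t).1 (F t).2 (h2 (g 0)) (h2 t) (h3 (g 0)) hle
  have hni : 1 ≤ (F t).1 i :=
    adj_keyC w hsymm hdiag hconn p hnotcusp i hvi (F t).1 (F t).2 (h2 t)
  -- bound (F t).2 i
  have hb : ((F t).2 i : ℤ) ≤ ((∑ k ∈ univ.erase i, w i k : ℕ) : ℤ) + 2 * (p i : ℤ)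
      + ((∑ k ∈ univ.erase i, w i k * n0 k : ℕ) : ℤ) := by
    have heq := h2 t i
    have h5 : ((F t).2 i : ℤ) ≤ ((F t).2 i : ℤ) * (F t).1 i :=
      le_mul_of_one_le_right (Int.natCast_nonneg _) (by exact_mod_cast hni)
    have h6 : (∑ k ∈ univ.erase i, (w i k : ℤ) * (F t).1 k)
        ≤ ∑ k ∈ univ.erase i, (w i k : ℤ) * n0 k := by
      apply Finset.sum_le_sum
      intro k _
      exact mul_le_mul_of_nonneg_left (by exact_mod_cast hcomp k) (Int.natCast_nonneg _)
    have c1 : ((∑ k ∈ univ.erase i, w i k : ℕ) : ℤ) = ∑ k ∈ univ.erase i, (w i k : ℤ) := by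
      push_cast; rfl
    have c2 : ((∑ k ∈ univ.erase i, w i k * n0 k : ℕ) : ℤ)
        = ∑ k ∈ univ.erase i, (w i k : ℤ) * n0 k := by
      push_cast; rfl
    rw [c1, c2]
    linarith
  have hlt := h4 t
  rw [hBdef] at hK
  omega
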